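/- Let F be a real quadratic field with ring of integers 𝒪_F. The map φ sending a point (α : β) of the projective line ℙ¹(F) (represented by a pair (α,β) ∈ F² \ {(0,0)}, up to scaling by F^×) to the class of the fractional ideal α𝒪_F + β𝒪_F in the ideal class group Cl(F) is well defined and induces a bijection from the set of orbits SL₂(𝒪_F)\ℙ¹(F) onto Cl(F). Explicitly: φ((aα+bβ : cα+dβ)) = φ((α:β)) for every matrix (a b; c d) ∈ SL₂(𝒪_F); every ideal class equals φ((α:β)) for some (α:β); and if φ((α:β)) = φ((γ:δ)) then there exists g ∈ SL₂(𝒪_F) carrying (α:β) to (γ:δ). -/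

import Mathlib

open scoped nonZeroDivisors Classical

/-- The class in the ideal class group of the fractional ideal `α𝒪_F + β𝒪_F`
generated by a pair `(α, β) ≠ (0, 0)` of elements of `F` (junk value `1` for `(0,0)`). -/
noncomputable def pairIdealClass (F : Type*) [Field F] [NumberField F] (α β : F) :
    ClassGroup (NumberField.RingOfIntegers F) :=
  if h : α = 0 ∧ β = 0 then 1
  else
    ClassGroup.mk F
      (Units.mk0
        (FractionalIdeal.spanSingleton (NumberField.RingOfIntegers F)⁰ α +
          FractionalIdeal.spanSingleton (NumberField.RingOfIntegers F)⁰ β)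
        (by
          intro hzero
          apply h
          constructor
          · have hα : α ∈ FractionalIdeal.spanSingleton (NumberField.RingOfIntegers F)⁰ α +
                FractionalIdeal.spanSingleton (NumberField.RingOfIntegers F)⁰ β :=
              (FractionalIdeal.mem_add _ _ _).mpr
                ⟨α, FractionalIdeal.mem_spanSingleton_self _ α, 0, FractionalIdeal.zero_mem _, add_zero α⟩
            rw [hzero] at hα
            simpa using hα
          · have hβ : β ∈ FractionalIdeal.spanSingleton (NumberField.RingOfIntegers F)⁰ α +
                FractionalIdeal.spanSingleton (NumberField.RingOfIntegers F)⁰ β :=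
              (FractionalIdeal.mem_add _ _ _).mpr
                ⟨0, FractionalIdeal.zero_mem _, β, FractionalIdeal.mem_spanSingleton_self _ β, zero_add β⟩
            rw [hzero] at hβ
            simpa using hβ))

/-- The image in `F` of an entry of a matrix in `SL₂(𝒪_F)`. -/
noncomputable def slEntry (F : Type*) [Field F] [NumberField F]
    (g : Matrix.SpecialLinearGroup (Fin 2) (NumberField.RingOfIntegers F)) (i j : Fin 2) : F :=
  algebraMap (NumberField.RingOfIntegers F) F (g.1 i j)


section TwoGen

open UniqueFactorizationMonoid Multiset

variable {R : Type*} [CommRing R] [IsDomain R] [IsDedekindDomain R]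

theorem exists_sup_span_eq (I : Ideal R) (hI : I ≠ ⊥) :
    ∃ a b : R, I = Ideal.span {a} ⊔ Ideal.span {b} := by
  classical
  by_cases hT : I = ⊤
  · exact ⟨1, 0, by simp [hT, Ideal.span_singleton_one]⟩
  obtain ⟨a, haI, ha0⟩ := Submodule.exists_mem_ne_zero_of_ne_bot hI
  set A : Ideal R := Ideal.span {a} with hA
  have hA0 : A ≠ ⊥ := by simpa [hA, Ideal.span_singleton_eq_bot] using ha0
  have hAI : A ≤ I := (Ideal.span_singleton_le_iff_mem _).mpr haI
  set s : Finset (Ideal R) := (normalizedFactors A).toFinset with hs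
  have hprime : ∀ P ∈ s, Prime P := fun P hP =>
    prime_of_normalized_factor P (Multiset.mem_toFinset.mp hP)
  set e : Ideal R → ℕ := fun P => (normalizedFactors I).count P with he
  have hx : ∀ P ∈ s, ∃ x, x ∈ P ^ (e P) ∧ x ∉ P ^ (e P + 1) := by
    intro P hP
    haveI := Ideal.isPrime_of_prime (hprime P hP)
    obtain ⟨x, h1, h2⟩ := Ideal.exists_mem_pow_notMem_pow_succ P (hprime P hP).ne_zero
      (Ideal.IsPrime.ne_top inferInstance) (e P)
    exact ⟨x, h1, h2⟩
  choose! x hx1 hx2 using hx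
  obtain ⟨y, hy⟩ := IsDedekindDomain.exists_forall_sub_mem_ideal (s := s) id (fun P => e P + 1)
      (fun P hP => hprime P hP) (fun P _ Q _ hPQ => hPQ) (fun P => x P.1)
  have hymem : ∀ P ∈ s, y ∈ P ^ (e P) := by
    intro P hP
    have := hy P hP
    simpa using add_mem (Ideal.pow_le_pow_right (Nat.le_succ _) (this : y - x P ∈ (id P) ^ (e P + 1)))
      (hx1 P hP)
  have hynot : ∀ P ∈ s, y ∉ P ^ (e P + 1) := by
    intro P hP hy2
    exact hx2 P hP (by simpa using sub_mem hy2 (hy P hP))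
  -- normalizedFactors I ≤ normalizedFactors A
  have hnfle : normalizedFactors I ≤ normalizedFactors A :=
    (dvd_iff_normalizedFactors_le_normalizedFactors hI hA0).mp (Ideal.dvd_iff_le.mpr hAI)
  have hIprod : (normalizedFactors I).prod = I := prod_normalizedFactors_eq_self hI
  -- nf I nonempty
  have hnfI : normalizedFactors I ≠ 0 := by
    intro h0
    exact hT (by rw [← hIprod, h0, Multiset.prod_zero, Ideal.one_eq_top])
  obtain ⟨P0, hP0⟩ := Multiset.exists_mem_of_ne_zero hnfI
  have hP0s : P0 ∈ s := Multiset.mem_toFinset.mpr (Multiset.mem_of_le hnfle hP0)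
  have hy0 : y ≠ 0 := fun h => hynot P0 hP0s (h ▸ zero_mem _)
  set B : Ideal R := Ideal.span {y} with hB
  have hB0 : B ≠ ⊥ := by simpa [hB, Ideal.span_singleton_eq_bot] using hy0
  have hycount : ∀ P ∈ s, (normalizedFactors B).count P = e P := by
    intro P hP
    haveI := Ideal.isPrime_of_prime (hprime P hP)
    exact Ideal.count_normalizedFactors_eq
      ((Ideal.span_singleton_le_iff_mem _).mpr (hymem P hP))
      (fun h => hynot P hP (h (Ideal.mem_span_singleton_self y)))
  have hkey : normalizedFactors A ∩ normalizedFactors B = normalizedFactors I := by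
    apply Multiset.ext.mpr
    intro P
    rw [Multiset.count_inter]
    by_cases hP : P ∈ s
    · rw [hycount P hP]
      have h1 : (normalizedFactors I).count P ≤ (normalizedFactors A).count P :=
        Multiset.le_iff_count.mp hnfle P
      exact min_eq_right h1 ▸ rfl
    · have hA' : (normalizedFactors A).count P = 0 :=
        Multiset.count_eq_zero.mpr (fun h => hP (Multiset.mem_toFinset.mpr h))
      have hI' : (normalizedFactors I).count P = 0 :=
        Multiset.count_eq_zero.mpr
          (fun h => hP (Multiset.mem_toFinset.mpr (Multiset.mem_of_le hnfle h)))
      rw [hA', hI', Nat.zero_min]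
  refine ⟨a, y, ?_⟩
  rw [← hA, ← hB, sup_eq_prod_inf_factors hA0 hB0, hkey, hIprod]

end TwoGen


open FractionalIdeal

section PairIdl

variable (F : Type*) [Field F] [NumberField F]

local notation "R" => NumberField.RingOfIntegers F

/-- The fractional ideal generated by a pair. -/
noncomputable def pIdl (α β : F) : FractionalIdeal (R)⁰ F :=
  spanSingleton (R)⁰ α + spanSingleton (R)⁰ β

variable {F}

theorem mem_pIdl_of (u v : R) (α β : F) :
    algebraMap R F u * α + algebraMap R F v * β ∈ pIdl F α β := by
  rw [pIdl]
  exact (FractionalIdeal.mem_add _ _ _).mpr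
    ⟨_, mem_spanSingleton _ |>.mpr ⟨u, Algebra.smul_def u α⟩,
     _, mem_spanSingleton _ |>.mpr ⟨v, Algebra.smul_def v β⟩, rfl⟩

theorem mem_pIdl_left (α β : F) : α ∈ pIdl F α β := by
  simpa using mem_pIdl_of 1 0 α β

theorem mem_pIdl_right (α β : F) : β ∈ pIdl F α β := by
  simpa using mem_pIdl_of 0 1 α β

theorem pIdl_ne_zero {α β : F} (h : ¬(α = 0 ∧ β = 0)) : pIdl F α β ≠ 0 := by
  intro h0
  exact h ⟨by simpa [h0] using mem_pIdl_left α β, by simpa [h0] using mem_pIdl_right α β⟩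

theorem pairIdealClass_eq (α β : F) (h : ¬(α = 0 ∧ β = 0)) :
    pairIdealClass F α β = ClassGroup.mk F (Units.mk0 (pIdl F α β) (pIdl_ne_zero h)) := by
  rw [pairIdealClass, dif_neg h]
  rfl

theorem pIdl_smul (r α β : F) :
    pIdl F (r * α) (r * β) = spanSingleton (R)⁰ r * pIdl F α β := by
  rw [pIdl, pIdl, mul_add, spanSingleton_mul_spanSingleton, spanSingleton_mul_spanSingleton]

/-- A matrix with entries in `R` and determinant 1 preserves the pair ideal. -/
theorem pIdl_matrix (a b c d : R) (hdet : a * d - b * c = 1) (α β : F) :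
    pIdl F (algebraMap R F a * α + algebraMap R F b * β)
        (algebraMap R F c * α + algebraMap R F d * β) = pIdl F α β := by
  have hdet' : algebraMap R F a * algebraMap R F d - algebraMap R F b * algebraMap R F c = 1 := by
    rw [← _root_.map_mul, ← _root_.map_mul, ← _root_.map_sub, hdet, _root_.map_one]
  set x := algebraMap R F a * α + algebraMap R F b * β with hxd
  set y := algebraMap R F c * α + algebraMap R F d * β with hyd
  have hαx : α = algebraMap R F d * x + algebraMap R F (-b) * y := by
    rw [hxd, hyd, map_neg]
    field_simp
    linear_combination (-α) * hdet'
  have hβy : β = algebraMap R F (-c) * x + algebraMap R F a * y := by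
    rw [hxd, hyd, map_neg]
    field_simp
    linear_combination (-β) * hdet'
  apply le_antisymm
  · rw [pIdl, ← sup_eq_add]
    exact sup_le (spanSingleton_le_iff_mem.mpr (mem_pIdl_of a b α β))
      (spanSingleton_le_iff_mem.mpr (mem_pIdl_of c d α β))
  · conv_lhs => rw [pIdl]
    rw [← sup_eq_add]
    refine sup_le (spanSingleton_le_iff_mem.mpr ?_) (spanSingleton_le_iff_mem.mpr ?_)
    · rw [hαx]; exact mem_pIdl_of _ _ _ _
    · rw [hβy]; exact mem_pIdl_of _ _ _ _

/-- Bezout-type elements in the inverse ideal. -/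
theorem exists_bezout {α β : F} (h : ¬(α = 0 ∧ β = 0)) :
    ∃ p q : F, p ∈ (pIdl F α β)⁻¹ ∧ q ∈ (pIdl F α β)⁻¹ ∧ α * p - β * q = 1 := by
  have hne := pIdl_ne_zero h
  have h1 : (1 : F) ∈ pIdl F α β * (pIdl F α β)⁻¹ := by
    rw [mul_inv_cancel₀ hne]
    exact FractionalIdeal.one_mem_one _
  rw [pIdl, add_mul] at h1
  obtain ⟨u, hu, v, hv, huv⟩ := (FractionalIdeal.mem_add _ _ _).mp h1
  obtain ⟨p, hp, rfl⟩ := (mem_singleton_mul).mp hu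
  obtain ⟨q', hq', rfl⟩ := (mem_singleton_mul).mp hv
  refine ⟨p, -q', hp, ?_, by rw [mul_neg, sub_neg_eq_add, huv]⟩
  exact FractionalIdeal.mem_coe.mp (Submodule.neg_mem _ (FractionalIdeal.mem_coe.mpr hq'))

end PairIdl

section Parts

variable {F : Type*} [Field F] [NumberField F]

local notation "R" => NumberField.RingOfIntegers F

theorem part1 (α β : F) (h : ¬(α = 0 ∧ β = 0)) (r : F) (hr : r ≠ 0) :
    pairIdealClass F (r * α) (r * β) = pairIdealClass F α β := by
  have h' : ¬(r * α = 0 ∧ r * β = 0) := by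
    rintro ⟨h1, h2⟩
    exact h ⟨(mul_eq_zero.mp h1).resolve_left hr, (mul_eq_zero.mp h2).resolve_left hr⟩
  rw [pairIdealClass_eq _ _ h', pairIdealClass_eq _ _ h]
  have hrs : spanSingleton (R)⁰ r ≠ 0 := by rwa [Ne, spanSingleton_eq_zero_iff]
  have hu : Units.mk0 (pIdl F (r * α) (r * β)) (pIdl_ne_zero h') =
      Units.mk0 _ hrs * Units.mk0 (pIdl F α β) (pIdl_ne_zero h) :=
    Units.ext (by rw [Units.val_mul, Units.val_mk0, Units.val_mk0, Units.val_mk0, pIdl_smul])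
  rw [hu, _root_.map_mul]
  have h1 : ClassGroup.mk F (Units.mk0 (spanSingleton (R)⁰ r) hrs) = 1 :=
    ClassGroup.mk_eq_one_iff.mpr ⟨⟨r, by rw [Units.val_mk0, coe_spanSingleton]⟩⟩
  rw [h1, one_mul]

theorem part2 (α β : F) (h : ¬(α = 0 ∧ β = 0))
    (g : Matrix.SpecialLinearGroup (Fin 2) (NumberField.RingOfIntegers F)) :
    pairIdealClass F (slEntry F g 0 0 * α + slEntry F g 0 1 * β)
        (slEntry F g 1 0 * α + slEntry F g 1 1 * β) = pairIdealClass F α β := by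
  have hdet : g.1 0 0 * g.1 1 1 - g.1 0 1 * g.1 1 0 = 1 := by
    have h2 := g.2
    rwa [Matrix.det_fin_two] at h2
  have hp := pIdl_matrix (g.1 0 0) (g.1 0 1) (g.1 1 0) (g.1 1 1) hdet α β
  have hsl : ∀ i j, slEntry F g i j = algebraMap R F (g.1 i j) := fun _ _ => rfl
  have h' : ¬(slEntry F g 0 0 * α + slEntry F g 0 1 * β = 0 ∧
      slEntry F g 1 0 * α + slEntry F g 1 1 * β = 0) := by
    rintro ⟨h1, h2⟩
    apply pIdl_ne_zero h
    rw [← hp, ← hsl, ← hsl, ← hsl, ← hsl, h1, h2]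
    simp [pIdl, spanSingleton_zero]
  rw [pairIdealClass_eq _ _ h', pairIdealClass_eq _ _ h]
  congr 1
  apply Units.ext
  rw [Units.val_mk0, Units.val_mk0, hsl, hsl, hsl, hsl, hp]

theorem part3 (c : ClassGroup (NumberField.RingOfIntegers F)) :
    ∃ α β : F, ¬(α = 0 ∧ β = 0) ∧ pairIdealClass F α β = c := by
  obtain ⟨⟨I, hImem⟩, rfl⟩ := ClassGroup.mk0_surjective c
  have hI0 : I ≠ ⊥ := mem_nonZeroDivisors_iff_ne_zero.mp hImem
  obtain ⟨a, b, hab⟩ := exists_sup_span_eq I hI0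
  have h' : ¬(algebraMap R F a = 0 ∧ algebraMap R F b = 0) := by
    rintro ⟨h1, h2⟩
    have ha : a = 0 := IsFractionRing.injective R F (by rw [h1, _root_.map_zero])
    have hb : b = 0 := IsFractionRing.injective R F (by rw [h2, _root_.map_zero])
    apply hI0
    rw [hab, ha, hb]
    simp
  refine ⟨algebraMap R F a, algebraMap R F b, h', ?_⟩
  have hcoe : pIdl F (algebraMap R F a) (algebraMap R F b) =
      (I : FractionalIdeal (R)⁰ F) := by
    rw [pIdl, hab, coeIdeal_sup, coeIdeal_span_singleton, coeIdeal_span_singleton]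
  rw [pairIdealClass_eq _ _ h', ← ClassGroup.mk_mk0 F]
  congr 1
  apply Units.ext
  rw [Units.val_mk0, hcoe, FractionalIdeal.coe_mk0]

theorem part4 (α β γ δ : F) (hαβ : ¬(α = 0 ∧ β = 0)) (hγδ : ¬(γ = 0 ∧ δ = 0))
    (heq : pairIdealClass F α β = pairIdealClass F γ δ) :
    ∃ g : Matrix.SpecialLinearGroup (Fin 2) (NumberField.RingOfIntegers F), ∃ r : F, r ≠ 0 ∧
      slEntry F g 0 0 * α + slEntry F g 0 1 * β = r * γ ∧
      slEntry F g 1 0 * α + slEntry F g 1 1 * β = r * δ := by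
  rw [pairIdealClass_eq _ _ hαβ, pairIdealClass_eq _ _ hγδ] at heq
  set I := pIdl F α β with hIdef
  have hI0 : I ≠ 0 := pIdl_ne_zero hαβ
  have hJ0 : pIdl F γ δ ≠ 0 := pIdl_ne_zero hγδ
  have h1 : ClassGroup.mk F
      (Units.mk0 (pIdl F γ δ) hJ0 * (Units.mk0 I hI0)⁻¹) = 1 := by
    rw [_root_.map_mul, _root_.map_inv, ← heq, mul_inv_cancel]
  obtain ⟨⟨x, hx⟩⟩ := ClassGroup.mk_eq_one_iff.mp h1
  have hvalu : ((Units.mk0 (pIdl F γ δ) hJ0 * (Units.mk0 I hI0)⁻¹ :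
      (FractionalIdeal (R)⁰ F)ˣ) : FractionalIdeal (R)⁰ F) = pIdl F γ δ * I⁻¹ := by
    rw [Units.val_mul, Units.val_inv_eq_inv_val, Units.val_mk0, Units.val_mk0]
  have hval : pIdl F γ δ * I⁻¹ = spanSingleton (R)⁰ x := by
    apply coeToSubmodule_injective
    show ((pIdl F γ δ * I⁻¹ : FractionalIdeal (R)⁰ F) : Submodule R F) =
      ((spanSingleton (R)⁰ x : FractionalIdeal (R)⁰ F) : Submodule R F)
    rw [← hvalu, hx, coe_spanSingleton]
  have hx0 : x ≠ 0 := by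
    intro h0
    rw [h0, spanSingleton_zero] at hval
    rcases mul_eq_zero.mp hval with h | h
    · exact hJ0 h
    · exact inv_ne_zero hI0 h
  have hinv : I⁻¹ * I = 1 := by rw [mul_comm]; exact mul_inv_cancel₀ hI0
  have hJI : pIdl F γ δ = spanSingleton (R)⁰ x * I := by
    rw [← hval, mul_assoc, hinv, mul_one]
  set γ' := x⁻¹ * γ with hγ'def
  set δ' := x⁻¹ * δ with hδ'def
  have hI' : pIdl F γ' δ' = I := by
    rw [hγ'def, hδ'def, pIdl_smul, hJI, ← mul_assoc, spanSingleton_mul_spanSingleton,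
      inv_mul_cancel₀ hx0, spanSingleton_one, one_mul]
  have hγ'I : γ' ∈ I := hI' ▸ mem_pIdl_left γ' δ'
  have hδ'I : δ' ∈ I := hI' ▸ mem_pIdl_right γ' δ'
  have hαI : α ∈ I := mem_pIdl_left α β
  have hβI : β ∈ I := mem_pIdl_right α β
  obtain ⟨p, q, hpmem, hqmem, hpq⟩ := exists_bezout hαβ
  have hγδ' : ¬(γ' = 0 ∧ δ' = 0) := by
    rintro ⟨h1', h2'⟩
    exact hγδ ⟨(mul_eq_zero.mp h1').resolve_left (inv_ne_zero hx0),
      (mul_eq_zero.mp h2').resolve_left (inv_ne_zero hx0)⟩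
  obtain ⟨s, r, hsmem, hrmem, hsr⟩ := exists_bezout hγδ'
  rw [hI'] at hsmem hrmem
  rw [← hIdef] at hpmem hqmem
  have hmem1 : ∀ u w : F, u ∈ I → w ∈ I⁻¹ → ∃ m : R, algebraMap R F m = u * w := by
    intro u w hu hw
    have hm : u * w ∈ (1 : FractionalIdeal (R)⁰ F) := by
      rw [← mul_inv_cancel₀ hI0]
      exact FractionalIdeal.mul_mem_mul hu hw
    exact (FractionalIdeal.mem_one_iff _).mp hm
  obtain ⟨m1, hm1⟩ := hmem1 γ' p hγ'I hpmem
  obtain ⟨m2, hm2⟩ := hmem1 β r hβI hrmem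
  obtain ⟨m3, hm3⟩ := hmem1 α r hαI hrmem
  obtain ⟨m4, hm4⟩ := hmem1 γ' q hγ'I hqmem
  obtain ⟨m5, hm5⟩ := hmem1 δ' p hδ'I hpmem
  obtain ⟨m6, hm6⟩ := hmem1 β s hβI hsmem
  obtain ⟨m7, hm7⟩ := hmem1 α s hαI hsmem
  obtain ⟨m8, hm8⟩ := hmem1 δ' q hδ'I hqmem
  have hdetR : (m1 - m2) * (m7 - m8) - (m3 - m4) * (m5 - m6) = 1 := by
    apply IsFractionRing.injective R F
    simp only [_root_.map_one, _root_.map_sub, _root_.map_mul]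
    rw [hm1, hm2, hm3, hm4, hm5, hm6, hm7, hm8]
    linear_combination (γ' * s - δ' * r) * hpq + hsr
  have e00 : (!![m1 - m2, m3 - m4; m5 - m6, m7 - m8] : Matrix (Fin 2) (Fin 2) R) 0 0
      = m1 - m2 := by simp
  have e01 : (!![m1 - m2, m3 - m4; m5 - m6, m7 - m8] : Matrix (Fin 2) (Fin 2) R) 0 1
      = m3 - m4 := by simp
  have e10 : (!![m1 - m2, m3 - m4; m5 - m6, m7 - m8] : Matrix (Fin 2) (Fin 2) R) 1 0
      = m5 - m6 := by simp
  have e11 : (!![m1 - m2, m3 - m4; m5 - m6, m7 - m8] : Matrix (Fin 2) (Fin 2) R) 1 1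
      = m7 - m8 := by simp
  refine ⟨⟨!![m1 - m2, m3 - m4; m5 - m6, m7 - m8], by
    rw [Matrix.det_fin_two, e00, e01, e10, e11]; exact hdetR⟩, x⁻¹, inv_ne_zero hx0, ?_, ?_⟩
  · show algebraMap R F ((!![m1 - m2, m3 - m4; m5 - m6, m7 - m8] : Matrix (Fin 2) (Fin 2) R) 0 0)
        * α + algebraMap R F
          ((!![m1 - m2, m3 - m4; m5 - m6, m7 - m8] : Matrix (Fin 2) (Fin 2) R) 0 1) * β = x⁻¹ * γ
    rw [e00, e01, _root_.map_sub, _root_.map_sub, hm1, hm2, hm3, hm4, ← hγ'def]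
    linear_combination γ' * hpq
  · show algebraMap R F ((!![m1 - m2, m3 - m4; m5 - m6, m7 - m8] : Matrix (Fin 2) (Fin 2) R) 1 0)
        * α + algebraMap R F
          ((!![m1 - m2, m3 - m4; m5 - m6, m7 - m8] : Matrix (Fin 2) (Fin 2) R) 1 1) * β = x⁻¹ * δ
    rw [e10, e11, _root_.map_sub, _root_.map_sub, hm5, hm6, hm7, hm8, ← hδ'def]
    linear_combination δ' * hpq

end Parts

/-- The map `φ : (α : β) ↦ [α𝒪_F + β𝒪_F]` is well defined on `ℙ¹(F)` (invariant under
scaling and under the action of `SL₂(𝒪_F)`) and induces a bijection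
`SL₂(𝒪_F)\ℙ¹(F) → Cl(F)`. -/
theorem classGroup_bijection_of_projective_line
    (d : ℤ) (hd : 1 < d) (hsf : Squarefree d)
    (F : Type*) [Field F] [NumberField F]
    (hrank : Module.finrank ℚ F = 2)
    (sqrtd : F) (hsqrtd : sqrtd ^ 2 = (d : F)) :
    -- well defined under scaling
    (∀ α β : F, ¬(α = 0 ∧ β = 0) → ∀ r : F, r ≠ 0 →
      pairIdealClass F (r * α) (r * β) = pairIdealClass F α β) ∧
    -- well defined under the action of SL₂(𝒪_F)
    (∀ α β : F, ¬(α = 0 ∧ β = 0) →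
      ∀ g : Matrix.SpecialLinearGroup (Fin 2) (NumberField.RingOfIntegers F),
        pairIdealClass F (slEntry F g 0 0 * α + slEntry F g 0 1 * β)
            (slEntry F g 1 0 * α + slEntry F g 1 1 * β)
          = pairIdealClass F α β) ∧
    -- surjectivity
    (∀ c : ClassGroup (NumberField.RingOfIntegers F),
      ∃ α β : F, ¬(α = 0 ∧ β = 0) ∧ pairIdealClass F α β = c) ∧
    -- injectivity on SL₂(𝒪_F)-orbits
    (∀ α β γ δ : F, ¬(α = 0 ∧ β = 0) → ¬(γ = 0 ∧ δ = 0) →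
      pairIdealClass F α β = pairIdealClass F γ δ →
      ∃ g : Matrix.SpecialLinearGroup (Fin 2) (NumberField.RingOfIntegers F), ∃ r : F, r ≠ 0 ∧
        slEntry F g 0 0 * α + slEntry F g 0 1 * β = r * γ ∧
        slEntry F g 1 0 * α + slEntry F g 1 1 * β = r * δ) := by
  exact ⟨fun α β h r hr => part1 α β h r hr,
    fun α β h g => part2 α β h g,
    fun c => part3 c,
    fun α β γ δ h1 h2 he => part4 α β γ δ h1 h2 he⟩
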